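/- Let ω ∈ {α₁,...,α_m, β}^ℤ and suppose there is i ∈ ℤ such that ω_i = β and Ĥ_{α,i+1−k}(ω) ≠ Ĥ_{α,i+1}(ω) for all k ≥ 1. Then liminf_{n→∞} (1/n) · #{i−n+1 ≤ j ≤ i : ω_j = β} ≥ 1/2. -/
import Mathlib

abbrev AlphaLetter (m : ℕ) := Fin (m + 1)

def asign (m : ℕ) (c : AlphaLetter m) : ℤ := if (c : ℕ) < m then 1 else -1

def Hhat (m : ℕ) (ω : ℤ → AlphaLetter m) (i : ℤ) : ℤ :=
  if 0 ≤ i then ∑ k ∈ Finset.range i.toNat, asign m (ω k)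
  else -∑ k ∈ Finset.range (-i).toNat, asign m (ω (i + k))

open Filter

lemma asign_eq (m : ℕ) (c : AlphaLetter m) :
    asign m c = if c = Fin.last m then -1 else 1 := by
  have hc := c.isLt
  rw [asign]
  by_cases h : c = Fin.last m
  · rw [if_neg, if_pos h]
    simp [h]
  · have hne : (c : ℕ) ≠ m := fun hh => h (Fin.ext (by simp [hh]))
    rw [if_pos (by omega), if_neg h]

lemma asign_abs (m : ℕ) (c : AlphaLetter m) : asign m c = 1 ∨ asign m c = -1 := by
  rw [asign]; split_ifs <;> simp

lemma Hhat_succ (m : ℕ) (ω : ℤ → AlphaLetter m) (a : ℤ) :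
    Hhat m ω (a + 1) = Hhat m ω a + asign m (ω a) := by
  rcases le_or_gt 0 a with h | h
  · rw [Hhat, Hhat, if_pos (by omega : (0:ℤ) ≤ a + 1), if_pos h]
    have ht : (a + 1).toNat = a.toNat + 1 := by omega
    rw [ht, Finset.sum_range_succ, Int.toNat_of_nonneg h]
  · rcases eq_or_lt_of_le (by omega : a + 1 ≤ 0) with h1 | h1
    · have h0 : a = -1 := by omega
      subst h0
      norm_num [Hhat]
    · rw [Hhat, Hhat, if_neg (by omega), if_neg (by omega)]
      have ht : (-a).toNat = (-(a+1)).toNat + 1 := by omega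
      have hx : ∀ k ∈ Finset.range (-(a+1)).toNat,
          asign m (ω (a + ↑(k + 1))) = asign m (ω ((a + 1) + ↑k)) := by
        intro k _
        congr 2
        push_cast
        ring
      rw [ht, Finset.sum_range_succ', Finset.sum_congr rfl hx]
      simp only [Nat.cast_zero, add_zero]
      ring

/-- If the `β` at position `i` is never matched looking
backward, then in lower density at least half of the symbols in the windows
`[i-n+1, i]` are `β`. -/
theorem unmatched_beta_density (m : ℕ) (hm : 2 ≤ m) (ω : ℤ → AlphaLetter m)
    (i : ℤ) (hβ : ω i = Fin.last m)
    (hun : ∀ k : ℕ, 1 ≤ k → Hhat m ω (i + 1 - k) ≠ Hhat m ω (i + 1)) :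
    (1 / 2 : ℝ) ≤ atTop.liminf (fun n : ℕ =>
      (((Finset.Icc (i - n + 1) i).filter (fun j => ω j = Fin.last m)).card : ℝ) / n) := by
  set B : ℕ → ℕ := fun n => ((Finset.Icc (i - n + 1) i).filter (fun j => ω j = Fin.last m)).card with hB
  -- sum over window equals Hhat difference
  have hsum : ∀ n : ℕ, ∑ j ∈ Finset.Icc (i - n + 1) i, asign m (ω j)
      = Hhat m ω (i + 1) - Hhat m ω (i + 1 - n) := by
    intro n
    induction n with
    | zero => simp [Finset.Icc_eq_empty (by omega : ¬ (i - (0:ℕ) + 1 ≤ i))]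
    | succ n ih =>
      have hins : Finset.Icc (i - (n+1 : ℕ) + 1) i = insert (i - n) (Finset.Icc (i - n + 1) i) := by
        ext x
        simp only [Finset.mem_Icc, Finset.mem_insert]
        push_cast
        omega
      have hnm : (i - (n:ℤ)) ∉ Finset.Icc (i - (n:ℤ) + 1) i := by
        simp only [Finset.mem_Icc]; omega
      rw [hins, Finset.sum_insert hnm, ih]
      have hstep : Hhat m ω ((i - n) + 1) = Hhat m ω (i - n) + asign m (ω (i - n)) :=
        Hhat_succ m ω (i - n)
      have e1 : i + 1 - ((n:ℤ) + 1) = i - n := by ring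
      have e2 : i + 1 - (n:ℤ) = (i - n) + 1 := by ring
      push_cast
      rw [e1, e2, hstep]
      ring
  -- the unmatched condition forces negativity
  have hneg : ∀ n : ℕ, 1 ≤ n → Hhat m ω (i + 1) - Hhat m ω (i + 1 - n) ≤ -1 := by
    intro n hn
    induction n with
    | zero => omega
    | succ n ih =>
      rcases Nat.eq_or_lt_of_le hn with h1 | h1
      · -- n + 1 = 1
        have hn0 : n = 0 := by omega
        subst hn0
        have : Hhat m ω (i + 1) = Hhat m ω i + asign m (ω i) := Hhat_succ m ω i
        have ha : asign m (ω i) = -1 := by rw [asign_eq, if_pos hβ]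
        have e : i + 1 - ((0:ℕ)+1 : ℕ) = i := by push_cast; ring
        rw [e, this, ha]
        omega
      · have hn1 : 1 ≤ n := by omega
        have ihn := ih hn1
        have hstep : Hhat m ω ((i - n) + 1) = Hhat m ω (i - n) + asign m (ω (i - n)) :=
          Hhat_succ m ω (i - n)
        have e1 : i + 1 - ((n:ℤ) + 1) = i - n := by ring
        have e2 : i + 1 - (n:ℤ) = (i - n) + 1 := by ring
        have hne := hun (n+1) (by omega)
        rw [show ((n+1 : ℕ) : ℤ) = (n:ℤ) + 1 by push_cast; ring, e1] at hne ⊢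
        rw [e2, hstep] at ihn
        rcases asign_abs m (ω (i - n)) with h | h <;> omega
  -- sum in terms of B
  have hcount : ∀ n : ℕ, ∑ j ∈ Finset.Icc (i - n + 1) i, asign m (ω j)
      = (Finset.Icc (i - n + 1) i).card - 2 * B n := by
    intro n
    have : ∀ j ∈ Finset.Icc (i - (n:ℤ) + 1) i, asign m (ω j)
        = if ω j = Fin.last m then -1 else 1 := fun j _ => asign_eq m (ω j)
    rw [Finset.sum_congr rfl this, Finset.sum_ite, Finset.sum_const, Finset.sum_const]
    have hc := Finset.card_filter_add_card_filter_not
      (s := Finset.Icc (i - (n:ℤ) + 1) i) (p := fun j => ω j = Fin.last m)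
    simp only [hB, nsmul_eq_mul]
    push_cast
    push_cast at hc
    linarith
  -- cardinality of the window
  have hcard : ∀ n : ℕ, (Finset.Icc (i - n + 1) i).card = n := by
    intro n
    rw [Int.card_Icc]
    omega
  -- main bound: for n ≥ 1, 1/2 ≤ B n / n
  have hbound : ∀ n : ℕ, 1 ≤ n → (1/2 : ℝ) ≤ (B n : ℝ) / n := by
    intro n hn
    have h1 : (n : ℤ) - 2 * B n ≤ -1 := by
      have := hsum n
      rw [hcount n, hcard n] at this
      have := hneg n hn
      omega
    have hn' : (0:ℝ) < n := by exact_mod_cast hn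
    rw [le_div_iff₀ hn']
    have : (n : ℝ) + 1 ≤ 2 * B n := by exact_mod_cast (by omega : (n:ℤ) + 1 ≤ 2 * B n)
    linarith
  apply Filter.le_liminf_of_le
  · -- cobounded: bounded above by 1
    apply Filter.IsBoundedUnder.isCoboundedUnder_ge
    refine ⟨1, Filter.eventually_map.2 ?_⟩
    filter_upwards [Filter.eventually_ge_atTop 1] with n hn
    have hn' : (0:ℝ) < n := by exact_mod_cast hn
    rw [div_le_one hn']
    have : B n ≤ n := by rw [hB]; simpa [hcard n] using Finset.card_filter_le (Finset.Icc (i - (n:ℤ) + 1) i) _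
    exact_mod_cast this
  · filter_upwards [Filter.eventually_ge_atTop 1] with n hn
    exact hbound n hn
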